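/- Let c : I → ℝ⁴ be a C² curve and λ : I → ℝ a C¹ function satisfying the sub-Riemannian Euler–Lagrange system ẍ₁ = λ̇x₂ + 2λẋ₂, ẍ₂ = −λ̇x₁ − 2λẋ₁, ẍ₃ = −λ̇x₄ − 2λẋ₄, ẍ₄ = λ̇x₃ + 2λẋ₃. Then: (1) β̇(s) = −2λ(s)γ(s) and γ̇(s) = 2λ(s)β(s) for all s, and consequently β² + γ² (the square of the sub-Riemannian speed) is constant along c; (2) if moreover c lies on H and is horizontal with respect to span{X,Y} (α ≡ 0), then the multiplier λ is constant on I. -/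

import Mathlib

open Real Set

noncomputable section

/-- Pseudo-Euclidean inner product of signature (2,2) on ℝ⁴. -/
def ip (x y : Fin 4 → ℝ) : ℝ :=
  -(x 0 * y 0) - x 1 * y 1 + x 2 * y 2 + x 3 * y 3

/-- Anti-de Sitter space H = {x : ⟨x,x⟩ = -1}. -/
def AdS : Set (Fin 4 → ℝ) := {x | ip x x = -1}

/-- The vector field T(x) = (−x₂, x₁, x₄, −x₃). -/
def Tf (x : Fin 4 → ℝ) : Fin 4 → ℝ := ![-(x 1), x 0, x 3, -(x 2)]

/-- The vector field X(x) = (x₃, x₄, x₁, x₂). -/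
def Xf (x : Fin 4 → ℝ) : Fin 4 → ℝ := ![x 2, x 3, x 0, x 1]

/-- The vector field Y(x) = (x₄, −x₃, −x₂, x₁). -/
def Yf (x : Fin 4 → ℝ) : Fin 4 → ℝ := ![x 3, -(x 2), -(x 1), x 0]

/-- The normal vector field N(x) = x. -/
def Nf (x : Fin 4 → ℝ) : Fin 4 → ℝ := x

/-- α(s) = ⟨ċ(s), T(c(s))⟩. -/
def alphaC (c : ℝ → Fin 4 → ℝ) (s : ℝ) : ℝ := ip (deriv c s) (Tf (c s))

/-- β(s) = ⟨ċ(s), X(c(s))⟩. -/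
def betaC (c : ℝ → Fin 4 → ℝ) (s : ℝ) : ℝ := ip (deriv c s) (Xf (c s))

/-- γ(s) = ⟨ċ(s), Y(c(s))⟩. -/
def gammaC (c : ℝ → Fin 4 → ℝ) (s : ℝ) : ℝ := ip (deriv c s) (Yf (c s))

/-- Projection of a pi-valued derivative to a component. -/
lemma proj4 {f : ℝ → Fin 4 → ℝ} {v : Fin 4 → ℝ} {s : ℝ} (h : HasDerivAt f v s) (i : Fin 4) :
    HasDerivAt (fun t => f t i) (v i) s := by
  have h2 := (ContinuousLinearMap.proj (R := ℝ) (φ := fun _ : Fin 4 => ℝ) i).hasFDerivAt.comp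
    s h.hasFDerivAt
  exact hasDerivAt_pi.1 h i

lemma hasDerivAt_betaC (c : ℝ → Fin 4 → ℝ) {s : ℝ} {L L' : ℝ}
    (h1 : DifferentiableAt ℝ c s) (h2 : DifferentiableAt ℝ (deriv c) s)
    (e1 : deriv (deriv c) s 0 = L' * c s 1 + 2 * L * deriv c s 1)
    (e2 : deriv (deriv c) s 1 = -(L' * c s 0) - 2 * L * deriv c s 0)
    (e3 : deriv (deriv c) s 2 = -(L' * c s 3) - 2 * L * deriv c s 3)
    (e4 : deriv (deriv c) s 3 = L' * c s 2 + 2 * L * deriv c s 2) :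
    HasDerivAt (betaC c) (-2 * L * gammaC c s) s := by
  have hx : ∀ i, HasDerivAt (fun t => c t i) (deriv c s i) s := proj4 h1.hasDerivAt
  have hd : ∀ i, HasDerivAt (fun t => deriv c t i) (deriv (deriv c) s i) s := proj4 h2.hasDerivAt
  have h : HasDerivAt (fun u => -(deriv c u 0 * c u 2) - deriv c u 1 * c u 3
      + deriv c u 2 * c u 0 + deriv c u 3 * c u 1) (-2 * L * gammaC c s) s := by
    have h' := ((((hd 0).mul (hx 2)).neg.sub ((hd 1).mul (hx 3))).add ((hd 2).mul (hx 0))).add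
      ((hd 3).mul (hx 1))
    convert h' using 1
    · rfl
    · rfl
    · rfl
    rw [e1, e2, e3, e4]
    simp only [gammaC, ip, Yf, Matrix.cons_val_zero, Matrix.cons_val_one, Matrix.head_cons,
      Matrix.cons_val_two, Matrix.tail_cons, Matrix.cons_val_three]
    ring
  exact h

lemma hasDerivAt_gammaC (c : ℝ → Fin 4 → ℝ) {s : ℝ} {L L' : ℝ}
    (h1 : DifferentiableAt ℝ c s) (h2 : DifferentiableAt ℝ (deriv c) s)
    (e1 : deriv (deriv c) s 0 = L' * c s 1 + 2 * L * deriv c s 1)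
    (e2 : deriv (deriv c) s 1 = -(L' * c s 0) - 2 * L * deriv c s 0)
    (e3 : deriv (deriv c) s 2 = -(L' * c s 3) - 2 * L * deriv c s 3)
    (e4 : deriv (deriv c) s 3 = L' * c s 2 + 2 * L * deriv c s 2) :
    HasDerivAt (gammaC c) (2 * L * betaC c s) s := by
  have hx : ∀ i, HasDerivAt (fun t => c t i) (deriv c s i) s := proj4 h1.hasDerivAt
  have hd : ∀ i, HasDerivAt (fun t => deriv c t i) (deriv (deriv c) s i) s := proj4 h2.hasDerivAt
  have h : HasDerivAt (fun u => -(deriv c u 0 * c u 3) - deriv c u 1 * -(c u 2)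
      + deriv c u 2 * -(c u 1) + deriv c u 3 * c u 0) (2 * L * betaC c s) s := by
    have h' := ((((hd 0).mul (hx 3)).neg.sub ((hd 1).mul (hx 2).neg)).add
      ((hd 2).mul (hx 1).neg)).add ((hd 3).mul (hx 0))
    convert h' using 1
    · rfl
    · rfl
    · rfl
    rw [e1, e2, e3, e4]
    simp only [betaC, ip, Xf, Matrix.cons_val_zero, Matrix.cons_val_one, Matrix.head_cons,
      Matrix.cons_val_two, Matrix.tail_cons, Matrix.cons_val_three]
    erw [Pi.neg_apply, Pi.neg_apply]
    ring
  exact h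

/-- along a C² solution of the sub-Riemannian Euler–Lagrange system
ẍ₁ = λ̇x₂ + 2λẋ₂, ẍ₂ = −λ̇x₁ − 2λẋ₁, ẍ₃ = −λ̇x₄ − 2λẋ₄, ẍ₄ = λ̇x₃ + 2λẋ₃:
(1) β̇ = −2λγ and γ̇ = 2λβ, hence β² + γ² is constant;
(2) if the curve lies on AdS and is horizontal for span{X,Y} (α ≡ 0), then λ is
constant on I. -/
theorem subRiemannian_euler_lagrange (I : Set ℝ) (hI : I.OrdConnected)
    (c : ℝ → Fin 4 → ℝ) (lam : ℝ → ℝ)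
    (hc1 : ∀ s ∈ I, DifferentiableAt ℝ c s)
    (hc2 : ∀ s ∈ I, DifferentiableAt ℝ (deriv c) s)
    (hlam : ∀ s ∈ I, DifferentiableAt ℝ lam s)
    (hEL1 : ∀ s ∈ I, deriv (deriv c) s 0
      = deriv lam s * c s 1 + 2 * lam s * deriv c s 1)
    (hEL2 : ∀ s ∈ I, deriv (deriv c) s 1
      = -(deriv lam s * c s 0) - 2 * lam s * deriv c s 0)
    (hEL3 : ∀ s ∈ I, deriv (deriv c) s 2
      = -(deriv lam s * c s 3) - 2 * lam s * deriv c s 3)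
    (hEL4 : ∀ s ∈ I, deriv (deriv c) s 3
      = deriv lam s * c s 2 + 2 * lam s * deriv c s 2) :
    ((∀ s ∈ I, deriv (betaC c) s = -2 * lam s * gammaC c s ∧
        deriv (gammaC c) s = 2 * lam s * betaC c s) ∧
      (∀ s ∈ I, ∀ t ∈ I,
        (betaC c s)^2 + (gammaC c s)^2 = (betaC c t)^2 + (gammaC c t)^2)) ∧
    ((∀ s ∈ I, c s ∈ AdS) → (∀ s ∈ I, alphaC c s = 0) →
      ∀ s ∈ I, ∀ t ∈ I, lam s = lam t) := by
  have hconv : Convex ℝ I := hI.convex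
  have hβ : ∀ s ∈ I, HasDerivAt (betaC c) (-2 * lam s * gammaC c s) s := fun s hs =>
    hasDerivAt_betaC c (hc1 s hs) (hc2 s hs) (hEL1 s hs) (hEL2 s hs) (hEL3 s hs) (hEL4 s hs)
  have hγ : ∀ s ∈ I, HasDerivAt (gammaC c) (2 * lam s * betaC c s) s := fun s hs =>
    hasDerivAt_gammaC c (hc1 s hs) (hc2 s hs) (hEL1 s hs) (hEL2 s hs) (hEL3 s hs) (hEL4 s hs)
  refine ⟨⟨fun s hs => ⟨(hβ s hs).deriv, (hγ s hs).deriv⟩, ?_⟩, ?_⟩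
  · -- constancy of β² + γ²
    intro s hs t ht
    have key : ∀ x ∈ I, HasDerivWithinAt (fun u => (betaC c u)^2 + (gammaC c u)^2)
        ((fun _ => (0:ℝ)) x) I x := by
      intro x hx
      have h := ((hβ x hx).pow 2).add ((hγ x hx).pow 2)
      have h2 : HasDerivAt (fun u => (betaC c u)^2 + (gammaC c u)^2) 0 x := by
        convert h using 1
        · rfl
        · rfl
        · rfl
        norm_num
        ring
      exact h2.hasDerivWithinAt
    have hb2 := hconv.norm_image_sub_le_of_norm_hasDerivWithin_le (C := 0) key
      (fun x hx => by simp) ht hs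
    rw [zero_mul] at hb2
    have h3 := sub_eq_zero.mp (norm_le_zero_iff.mp hb2)
    simpa using h3
  · -- constancy of λ
    intro hAdS hHor s hs t ht
    have main : ∀ a ∈ I, ∀ b ∈ I, a < b → lam a = lam b := by
      intro a ha b hb hab
      have hJ : Icc a b ⊆ I := hI.out ha hb
      have hu : UniqueDiffOn ℝ (Icc a b) := uniqueDiffOn_Icc hab
      have hlam0 : ∀ x ∈ Icc a b, HasDerivWithinAt lam ((fun _ => (0:ℝ)) x) (Icc a b) x := by
        intro x hx
        have hxI := hJ hx
        have hxc : ∀ i, HasDerivAt (fun t => c t i) (deriv c x i) x :=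
          proj4 (hc1 x hxI).hasDerivAt
        have hdc : ∀ i, HasDerivAt (fun t => deriv c t i) (deriv (deriv c) x i) x :=
          proj4 (hc2 x hxI).hasDerivAt
        -- the AdS constraint is preserved: derivative of q(u) = ip(c u, c u)
        have hq : HasDerivAt (fun u => ip (c u) (c u))
            (-2 * (deriv c x 0 * c x 0) - 2 * (deriv c x 1 * c x 1)
              + 2 * (deriv c x 2 * c x 2) + 2 * (deriv c x 3 * c x 3)) x := by
          have h' := ((((hxc 0).mul (hxc 0)).neg.sub ((hxc 1).mul (hxc 1))).add
            ((hxc 2).mul (hxc 2))).add ((hxc 3).mul (hxc 3))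
          convert h' using 1
          · rfl
          · rfl
          · rfl
          ring
        have hq0 : HasDerivWithinAt (fun u => ip (c u) (c u)) 0 (Icc a b) x :=
          (hasDerivWithinAt_const x _ (-1)).congr (fun y hy => hAdS y (hJ hy)) (hAdS x hxI)
        have hQ := UniqueDiffWithinAt.eq_deriv _ (hu x hx) hq.hasDerivWithinAt hq0
        -- derivative of α
        have hα : HasDerivAt (alphaC c)
            (deriv (deriv c) x 0 * c x 1 - deriv (deriv c) x 1 * c x 0
              + deriv (deriv c) x 2 * c x 3 - deriv (deriv c) x 3 * c x 2) x := by
          have h' := ((((hdc 0).mul (hxc 1).neg).neg.sub ((hdc 1).mul (hxc 0))).add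
            ((hdc 2).mul (hxc 3))).add ((hdc 3).mul (hxc 2).neg)
          have h'' : HasDerivAt (fun u => -(deriv c u 0 * -(c u 1)) - deriv c u 1 * c u 0
              + deriv c u 2 * c u 3 + deriv c u 3 * -(c u 2))
              (deriv (deriv c) x 0 * c x 1 - deriv (deriv c) x 1 * c x 0
                + deriv (deriv c) x 2 * c x 3 - deriv (deriv c) x 3 * c x 2) x := by
            convert h' using 1
            · rfl
            · rfl
            · rfl
            erw [Pi.neg_apply, Pi.neg_apply]
            ring
          exact h''
        have hα0 : HasDerivWithinAt (alphaC c) 0 (Icc a b) x :=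
          (hasDerivWithinAt_const x _ 0).congr (fun y hy => hHor y (hJ hy)) (hHor x hxI)
        have hA := UniqueDiffWithinAt.eq_deriv _ (hu x hx) hα.hasDerivWithinAt hα0
        have hq' : -(c x 0 * c x 0) - c x 1 * c x 1 + c x 2 * c x 2 + c x 3 * c x 3 = -1 :=
          hAdS x hxI
        rw [hEL1 x hxI, hEL2 x hxI, hEL3 x hxI, hEL4 x hxI] at hA
        have hds : deriv lam x = 0 := by
          linear_combination hA + lam x * hQ + deriv lam x * hq'
        have hld := (hlam x hxI).hasDerivAt
        rw [hds] at hld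
        exact hld.hasDerivWithinAt
      have hb2 := (convex_Icc a b).norm_image_sub_le_of_norm_hasDerivWithin_le (C := 0) hlam0
        (fun x hx => by simp) (left_mem_Icc.2 hab.le) (right_mem_Icc.2 hab.le)
      rw [zero_mul] at hb2
      exact (sub_eq_zero.mp (norm_le_zero_iff.mp hb2)).symm
    rcases lt_trichotomy s t with h | h | h
    · exact main s hs t ht h
    · rw [h]
    · exact (main t ht s hs h).symm
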